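/- arXiv:1210.2199 — 3 statements merged into one kernel-verified Lean document; each statement's English description precedes it below -/
import Mathlib

section
/- Let d ≥ 1 and L ≥ 1. Let G₁, …, G_L be invertible d×d complex matrices with G₁G₂⋯G_L = I, and let θ₁ < θ₂ < ⋯ < θ_L < θ₁ + 2π be real numbers. Suppose d×d complex matrices Φ₁⁺, Φ₁⁻, …, Φ_L⁺, Φ_L⁻ and S satisfy: Φᵢ⁺ = Φᵢ⁻ Gᵢ for every 1 ≤ i ≤ L; Φᵢ₊₁⁻ = Φᵢ⁺ + (θᵢ₊₁ − θᵢ)·S for every 1 ≤ i ≤ L−1; and Φ₁⁻ = Φ_L⁺ + (θ₁ + 2π − θ_L)·S. If the d×d matrix (θ₁ + 2π − θ_L)·I + Σ_{i=2}^{L} (θᵢ − θᵢ₋₁)·GᵢGᵢ₊₁⋯G_L is invertible (the 'nonsingular junction condition'), then S = 0. -/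
lemma aux_drop_prod {d L k : ℕ} (h : k < L) (G : ℕ → Matrix (Fin d) (Fin d) ℂ) :
    (((List.range L).drop k).map G).prod = G k * (((List.range L).drop (k+1)).map G).prod := by
  rw [List.drop_eq_getElem_cons (by simpa using h)]
  simp

/-- **Nonsingular junction condition forces the zero sum condition.**
In 0-based indexing, `G i`, `θ i`, `Φp i`, `Φm i` for `0 ≤ i < L` model the jump
matrices `G₁,…,G_L` (invertible, with `G₁⋯G_L = I`), the angles
`θ₁ < ⋯ < θ_L < θ₁ + 2π`, and the boundary values `Φᵢ⁺, Φᵢ⁻` at a junction point of a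
Riemann–Hilbert problem.  Assuming `Φᵢ⁺ = Φᵢ⁻ Gᵢ`, `Φᵢ₊₁⁻ = Φᵢ⁺ + (θᵢ₊₁ − θᵢ)·S` and
`Φ₁⁻ = Φ_L⁺ + (θ₁ + 2π − θ_L)·S`, if the matrix
`(θ₁ + 2π − θ_L)·I + Σ_{i=2}^{L} (θᵢ − θᵢ₋₁)·GᵢGᵢ₊₁⋯G_L` is invertible
(the nonsingular junction condition), then `S = 0`. -/
theorem nonsingular_junction_condition_forces_zero_sum
    (d L : ℕ) (hd : 1 ≤ d) (hL : 1 ≤ L)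
    (G : ℕ → Matrix (Fin d) (Fin d) ℂ)
    (hGunit : ∀ i < L, IsUnit (G i))
    (hGprod : ((List.range L).map G).prod = 1)
    (θ : ℕ → ℝ)
    (hθmono : ∀ i, i + 1 < L → θ i < θ (i + 1))
    (hθwrap : θ (L - 1) < θ 0 + 2 * Real.pi)
    (Φp Φm : ℕ → Matrix (Fin d) (Fin d) ℂ)
    (S : Matrix (Fin d) (Fin d) ℂ)
    (hjump : ∀ i < L, Φp i = Φm i * G i)
    (hcont : ∀ i, i + 1 < L →
      Φm (i + 1) = Φp i + (((θ (i + 1) - θ i : ℝ) : ℂ)) • S)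
    (hwrap : Φm 0 = Φp (L - 1) + (((θ 0 + 2 * Real.pi - θ (L - 1) : ℝ) : ℂ)) • S)
    (hnonsing : IsUnit
      ((((θ 0 + 2 * Real.pi - θ (L - 1) : ℝ) : ℂ)) • (1 : Matrix (Fin d) (Fin d) ℂ) +
        ∑ i ∈ Finset.Ico 1 L,
          (((θ i - θ (i - 1) : ℝ) : ℂ)) • (((List.range L).drop i).map G).prod)) :
    S = 0 := by
  set P : ℕ → Matrix (Fin d) (Fin d) ℂ := fun k => (((List.range L).drop k).map G).prod with hP
  -- key invariant
  have key : ∀ k, k < L → Φm k * P k =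
      Φm 0 + ∑ i ∈ Finset.Ico 1 (k+1), (((θ i - θ (i - 1) : ℝ) : ℂ)) • (S * P i) := by
    intro k
    induction k with
    | zero =>
      intro _
      simp [hP, hGprod]
    | succ k ih =>
      intro hk
      have hkL : k < L := Nat.lt_of_succ_lt hk
      have h1 : Φm (k+1) = Φm k * G k + (((θ (k+1) - θ k : ℝ) : ℂ)) • S := by
        rw [hcont k hk, hjump k hkL]
      have h2 : P k = G k * P (k+1) := aux_drop_prod hkL G
      have h3 : Φm (k+1) * P (k+1)
          = Φm k * P k + (((θ (k+1) - θ k : ℝ) : ℂ)) • (S * P (k+1)) := by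
        rw [h1, h2, Matrix.add_mul, Matrix.smul_mul, mul_assoc]
      rw [h3, ih hkL, Finset.sum_Ico_succ_top (Nat.succ_le_succ (Nat.zero_le k))]
      abel
  have hL1 : L - 1 < L := by omega
  have hkey := key (L - 1) hL1
  have hPL1 : P (L - 1) = G (L - 1) := by
    have h1 : (L - 1) + 1 = L := by omega
    have h2 := aux_drop_prod hL1 G
    rw [h1] at h2
    have h3 : ((List.range L).drop L) = [] := by simp
    rw [hP]
    simp only []
    rw [h2, h3]
    simp
  have hwrap' : Φm 0 = Φm (L-1) * P (L-1) + (((θ 0 + 2 * Real.pi - θ (L - 1) : ℝ) : ℂ)) • S := by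
    rw [hwrap, hjump (L-1) hL1, hPL1]
  have hIco : (L - 1) + 1 = L := by omega
  rw [hkey, hIco] at hwrap'
  rw [add_assoc] at hwrap'
  have hz : ∑ i ∈ Finset.Ico 1 L, (((θ i - θ (i - 1) : ℝ) : ℂ)) • (S * P i)
      + (((θ 0 + 2 * Real.pi - θ (L - 1) : ℝ) : ℂ)) • S = 0 :=
    (left_eq_add.mp hwrap').symm ▸ rfl
  set M := (((θ 0 + 2 * Real.pi - θ (L - 1) : ℝ) : ℂ)) • (1 : Matrix (Fin d) (Fin d) ℂ) +
      ∑ i ∈ Finset.Ico 1 L, (((θ i - θ (i - 1) : ℝ) : ℂ)) • P i with hM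
  have hSM : S * M = 0 := by
    rw [hM, Matrix.mul_add, Matrix.mul_smul, mul_one, Finset.mul_sum]
    simp only [Matrix.mul_smul]
    rw [add_comm]
    exact hz
  obtain ⟨u, hu⟩ := hnonsing
  rw [← hu] at hSM
  have h : S * (u : Matrix (Fin d) (Fin d) ℂ) * ((u⁻¹ : (Matrix (Fin d) (Fin d) ℂ)ˣ) : Matrix (Fin d) (Fin d) ℂ) = 0 * ((u⁻¹ : (Matrix (Fin d) (Fin d) ℂ)ˣ) : Matrix (Fin d) (Fin d) ℂ) := by rw [hSM]
  rwa [mul_assoc, Units.mul_inv, mul_one, zero_mul] at h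
end

section
/- Let d ≥ 1 and L ≥ 1. Let G₁, …, G_L be d×d complex matrices with G₁G₂⋯G_L = I. Suppose d×d complex matrices Φ₁⁺, Φ₁⁻, …, Φ_L⁺, Φ_L⁻ satisfy: Φᵢ⁺ = Φᵢ⁻ Gᵢ for every 1 ≤ i ≤ L−1; Φᵢ₊₁⁻ = Φᵢ⁺ for every 1 ≤ i ≤ L−1; and Φ₁⁻ = Φ_L⁺. Then automatically Φ_L⁺ = Φ_L⁻ G_L; that is, the L-th jump condition is implied by the first L−1 jump conditions together with the continuity relations and the cyclic condition on the jump matrices. -/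
/-- **The last jump condition is implied by the others.**
In 0-based indexing, `G i`, `Φp i`, `Φm i` for `0 ≤ i < L` model the jump matrices
`G₁,…,G_L` (with `G₁⋯G_L = I`) and the boundary values `Φᵢ⁺, Φᵢ⁻` at a junction point
of a Riemann–Hilbert problem.  If `Φᵢ⁺ = Φᵢ⁻ Gᵢ` for `1 ≤ i ≤ L−1`, `Φᵢ₊₁⁻ = Φᵢ⁺` for
`1 ≤ i ≤ L−1`, and `Φ₁⁻ = Φ_L⁺`, then automatically `Φ_L⁺ = Φ_L⁻ G_L`. -/
theorem last_jump_condition_automatic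
    (d L : ℕ) (hd : 1 ≤ d) (hL : 1 ≤ L)
    (G : ℕ → Matrix (Fin d) (Fin d) ℂ)
    (hGprod : ((List.range L).map G).prod = 1)
    (Φp Φm : ℕ → Matrix (Fin d) (Fin d) ℂ)
    (hjump : ∀ i, i + 1 < L → Φp i = Φm i * G i)
    (hcont : ∀ i, i + 1 < L → Φm (i + 1) = Φp i)
    (hwrap : Φm 0 = Φp (L - 1)) :
    Φp (L - 1) = Φm (L - 1) * G (L - 1) := by
  have key : ∀ i, i < L → Φm i = Φm 0 * ((List.range i).map G).prod := by
    intro i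
    induction i with
    | zero => intro _; simp
    | succ n ih =>
      intro h
      have hn : n < L := Nat.lt_of_succ_lt h
      rw [hcont n h, hjump n h, ih hn, List.range_succ, List.map_append,
        List.prod_append, List.map_singleton, List.prod_singleton, mul_assoc]
  have hL1 : L - 1 < L := Nat.sub_lt hL Nat.one_pos
  have hLs : L - 1 + 1 = L := Nat.succ_pred_eq_of_pos hL
  calc Φp (L - 1) = Φm 0 := hwrap.symm
    _ = Φm 0 * ((List.range L).map G).prod := by rw [hGprod, mul_one]
    _ = Φm 0 * (((List.range (L-1)).map G).prod * G (L-1)) := by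
        have : ((List.range L).map G).prod
            = ((List.range (L-1)).map G).prod * G (L-1) := by
          conv_lhs => rw [← hLs]
          rw [List.range_succ, List.map_append, List.prod_append,
            List.map_singleton, List.prod_singleton]
        rw [this]
    _ = Φm (L - 1) * G (L - 1) := by rw [← mul_assoc, ← key (L-1) hL1]
end

section
/- For every integer k ≥ 0, the function z ↦ C T_k(z) − (1/(2πi))·Log(z−1), defined for z ∈ ℂ∖[−1,1] (where C T_k(z) = (1/(2πi)) ∫_{−1}^{1} T_k(t)/(t−z) dt and Log is the principal branch of the complex logarithm), has a limit as z → 1 with z ∉ [−1,1], and this limit (the 'finite part' at the right endpoint) equals −Log(2)/(2πi) + (1/(iπ))·(μ_{k−1}(1) + μ_k(1)), where μ_k(1) = Σ_{j=1}^{⌊(k+1)/2⌋} 1/(2j−1) (an empty sum when ⌊(k+1)/2⌋ = 0, and μ_{−1}(1) = 0). -/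
open Complex Filter Topology

/-- `μ_k(1) = Σ_{j=1}^{⌊(k+1)/2⌋} 1/(2j−1)` (an empty sum when `⌊(k+1)/2⌋ = 0`). -/
noncomputable def muOne (k : ℕ) : ℂ :=
  ∑ j ∈ Finset.Icc 1 ((k + 1) / 2), (1 : ℂ) / (2 * (j : ℂ) - 1)

section CauchyChebyshevAux

open Polynomial Polynomial.Chebyshev intervalIntegral MeasureTheory

def Sseg : Set ℂ := (fun t : ℝ => (t : ℂ)) '' Set.Icc (-1) 1

noncomputable def FF (k : ℕ) (z : ℂ) : ℂ :=
  ∫ t in (-1:ℝ)..1, (Polynomial.Chebyshev.T ℂ (k:ℤ)).eval (t:ℂ) / ((t:ℂ) - z)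

lemma sub_ne_zero_of_notmem {z : ℂ} (hz : z ∉ Sseg) {t : ℝ}
    (ht : t ∈ Set.Icc (-1:ℝ) 1) : (t : ℂ) - z ≠ 0 := by
  intro h
  exact hz ⟨t, ht, by rw [sub_eq_zero] at h; exact h⟩

lemma one_notin_compl : (1:ℂ) ∈ Sseg := ⟨1, by norm_num, by norm_num⟩

lemma ne_one_of_notmem {z : ℂ} (hz : z ∉ Sseg) : z ≠ 1 :=
  fun h => hz (h ▸ one_notin_compl)

lemma ne_neg_one_of_notmem {z : ℂ} (hz : z ∉ Sseg) : z + 1 ≠ 0 := by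
  intro h
  apply hz ⟨-1, by norm_num, ?_⟩
  push_cast
  linear_combination -h

lemma intInt (p : Polynomial ℂ) {z : ℂ} (hz : z ∉ Sseg) :
    IntervalIntegrable (fun t : ℝ => p.eval (t:ℂ) / ((t:ℂ) - z)) volume (-1) 1 := by
  apply ContinuousOn.intervalIntegrable
  rw [Set.uIcc_of_le (by norm_num)]
  apply ContinuousOn.div
  · exact ((p.continuous_aeval).comp Complex.continuous_ofReal).continuousOn
  · exact (Complex.continuous_ofReal.sub continuous_const).continuousOn
  · intro t ht; exact sub_ne_zero_of_notmem hz ht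

lemma integral_one_div_seg {z : ℂ} (hz : z ∉ Sseg) :
    ∫ t in (-1:ℝ)..1, 1 / ((t:ℂ) - z) = Complex.log ((z-1)/(z+1)) := by
  have hz1 : z + 1 ≠ 0 := ne_neg_one_of_notmem hz
  have key : ∀ t ∈ Set.uIcc (-1:ℝ) 1,
      HasDerivAt (fun t : ℝ => Complex.log ((z - (t:ℂ))/(z+1))) (1 / ((t:ℂ) - z)) t := by
    intro t ht
    rw [Set.uIcc_of_le (by norm_num)] at ht
    have hne : (t:ℂ) - z ≠ 0 := sub_ne_zero_of_notmem hz ht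
    have hne' : z - (t:ℂ) ≠ 0 := fun h => hne (by linear_combination -h)
    have hslit : (z - (t:ℂ))/(z+1) ∈ Complex.slitPlane := by
      rw [Complex.mem_slitPlane_iff]
      by_contra hcon
      push_neg at hcon
      obtain ⟨hre, him⟩ := hcon
      set w : ℂ := (z - (t:ℂ))/(z+1) with hw
      have hwr : w = (w.re : ℂ) := Complex.ext rfl (by simpa using him)
      have hzw : z - (t:ℂ) = w * (z+1) := by rw [hw, div_mul_cancel₀ _ hz1]
      set r : ℝ := w.re with hr
      have h1r : (0:ℝ) < 1 - r := by linarith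
      have h1rc : (1:ℂ) - (r:ℝ) ≠ 0 := by
        simpa using (Complex.ofReal_ne_zero.mpr (ne_of_gt h1r))
      have hzeq : z = (((t + r)/(1 - r) : ℝ) : ℂ) := by
        rw [hwr] at hzw
        push_cast
        rw [eq_div_iff h1rc]
        linear_combination hzw
      apply hz
      refine ⟨(t + r)/(1 - r), ⟨?_, ?_⟩, hzeq.symm⟩
      · rw [le_div_iff₀ h1r]; linarith [ht.1]
      · rw [div_le_one h1r]; linarith [ht.2]
    have hinner : HasDerivAt (fun x : ℂ => (z - x)/(z+1)) (-1/(z+1)) (t:ℂ) := by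
      simpa using ((hasDerivAt_id ((t:ℝ):ℂ)).const_sub z).div_const (z+1)
    have hd := ((Complex.hasDerivAt_log hslit).comp ((t:ℝ):ℂ) hinner).comp_ofReal
    convert hd using 1
    · rfl
    field_simp
    ring
  rw [intervalIntegral.integral_eq_sub_of_hasDerivAt key
    (by simpa using intInt 1 hz)]
  push_cast
  rw [show z - (-1:ℂ) = z + 1 by ring, div_self hz1]
  simp

lemma eventually_log_split :
    ∀ᶠ z : ℂ in nhdsWithin 1 Ssegᶜ,
      Complex.log ((z-1)/(z+1)) = Complex.log (z-1) - Complex.log (z+1) := by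
  have hb : ∀ᶠ z : ℂ in nhdsWithin 1 Ssegᶜ, z ∈ Metric.ball (1:ℂ) 1 :=
    Filter.Eventually.filter_mono nhdsWithin_le_nhds
      (Metric.eventually_nhds_iff_ball.mpr ⟨1, one_pos, fun y hy => hy⟩)
  filter_upwards [self_mem_nhdsWithin, hb] with z hz hzb
  set w : ℂ := z - 1 with hwdef
  set v : ℂ := z + 1 with hvdef
  have hwabs : ‖w‖ < 1 := by
    simpa [Complex.dist_eq, hwdef] using (Metric.mem_ball.mp hzb)
  have hw0 : w ≠ 0 := by
    simp only [hwdef, sub_ne_zero]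
    exact fun h => hz (h ▸ ⟨1, by norm_num, by norm_num⟩)
  have hwre : |w.re| < 1 := lt_of_le_of_lt (Complex.abs_re_le_norm w) hwabs
  have hvre : 0 < v.re := by
    have : v.re = w.re + 2 := by simp [hvdef, hwdef]; ring
    rw [this]
    cases abs_lt.mp hwre; linarith
  have hv0 : v ≠ 0 := fun h => by simp [h] at hvre
  have hvarg : |v.arg| < Real.pi / 2 :=
    Complex.abs_arg_lt_pi_div_two_iff.mpr (Or.inl hvre)
  have hvpi : v.arg ≠ Real.pi := by
    intro h
    rw [h] at hvarg
    have := Real.pi_pos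
    rw [abs_of_pos this] at hvarg
    linarith
  have him : w.im = v.im := by simp [hwdef, hvdef]
  have harg : w.arg - v.arg ∈ Set.Ioo (-Real.pi) Real.pi := by
    have hpi := Real.pi_pos
    rcases lt_trichotomy w.im 0 with h | h | h
    · have hwa : w.arg < 0 := Complex.arg_neg_iff.mpr h
      have hva : v.arg < 0 := Complex.arg_neg_iff.mpr (him ▸ h)
      have := Complex.neg_pi_lt_arg w
      have h2 := abs_lt.mp hvarg
      constructor <;> [linarith; linarith]
    · -- w.im = 0, so w.re > 0 (else z on segment)
      have hwre0 : 0 < w.re := by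
        by_contra hc
        push_neg at hc
        apply hz
        refine ⟨z.re, ⟨?_, ?_⟩, ?_⟩
        · have : z.re = 1 + w.re := by simp [hwdef]
          rw [this]; linarith [(abs_lt.mp hwre).1]
        · have : z.re = 1 + w.re := by simp [hwdef]
          rw [this]; linarith
        · have hzim : z.im = 0 := by
            have : w.im = z.im := by simp [hwdef]
            rw [← this, h]
          exact Complex.ext rfl (by simpa using hzim.symm)
      have hwa : w.arg = 0 := Complex.arg_eq_zero_iff.mpr ⟨le_of_lt hwre0, h⟩
      have hva : v.arg = 0 := Complex.arg_eq_zero_iff.mpr ⟨le_of_lt hvre, him ▸ h⟩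
      rw [hwa, hva]
      simp [hpi]
    · have hwa : 0 < w.arg := by
        rcases lt_or_eq_of_le (Complex.arg_nonneg_iff.mpr (le_of_lt h)) with h' | h'
        · exact h'
        · exfalso; exact absurd (Complex.arg_eq_zero_iff.mp h'.symm).2 (ne_of_gt h)
      have hva : 0 < v.arg := by
        rcases lt_or_eq_of_le (Complex.arg_nonneg_iff.mpr (him ▸ le_of_lt h)) with h' | h'
        · exact h'
        · exfalso
          exact absurd (Complex.arg_eq_zero_iff.mp h'.symm).2 (ne_of_gt (him ▸ h))
      have hwpi : w.arg < Real.pi := by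
        rcases lt_or_eq_of_le (Complex.arg_le_pi w) with h' | h'
        · exact h'
        · exfalso; exact absurd (Complex.arg_eq_pi_iff.mp h').2 (ne_of_gt h)
      have h2 := abs_lt.mp hvarg
      constructor <;> [linarith; linarith]
  rw [div_eq_mul_inv, Complex.log_mul hw0 (inv_ne_zero hv0), Complex.log_inv v hvpi,
    sub_eq_add_neg]
  rw [Complex.arg_inv, if_neg hvpi]
  exact ⟨harg.1, le_of_lt harg.2⟩

lemma tendsto_self_mul_log : Tendsto (fun w : ℂ => w * Complex.log w) (𝓝 0) (𝓝 0) := by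
  rw [tendsto_zero_iff_norm_tendsto_zero]
  have hbound : ∀ w : ℂ, ‖w * Complex.log w‖ ≤
      |‖w‖ * Real.log ‖w‖| + Real.pi * ‖w‖ := by
    intro w
    rw [norm_mul]
    have h1 : ‖Complex.log w‖ ≤ |Real.log ‖w‖| + Real.pi := by
      calc ‖Complex.log w‖ ≤ |(Complex.log w).re| + |(Complex.log w).im| :=
            Complex.norm_le_abs_re_add_abs_im _
        _ ≤ |Real.log ‖w‖| + Real.pi := by
            rw [Complex.log_re, Complex.log_im]
            exact add_le_add_right (Complex.abs_arg_le_pi w) _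
    calc ‖w‖ * ‖Complex.log w‖ ≤ ‖w‖ * (|Real.log ‖w‖| + Real.pi) := by
          exact mul_le_mul_of_nonneg_left h1 (norm_nonneg w)
      _ = |‖w‖ * Real.log ‖w‖| + Real.pi * ‖w‖ := by
          rw [abs_mul, _root_.abs_of_nonneg (norm_nonneg w)]
          ring
  apply squeeze_zero (fun t => norm_nonneg _) hbound
  have habs : Tendsto (fun w : ℂ => ‖w‖) (𝓝 0) (𝓝 0) := by
    simpa using (continuous_norm.tendsto (0:ℂ))
  have hG : Tendsto (fun x : ℝ => |x * Real.log x| + Real.pi * x) (𝓝 0) (𝓝 0) := by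
    have hc : Continuous (fun x : ℝ => |x * Real.log x| + Real.pi * x) :=
      Real.continuous_mul_log.abs.add (continuous_const.mul continuous_id)
    have := hc.tendsto 0
    simpa using this
  exact hG.comp habs

lemma tendsto_sub_one_mul_log :
    Tendsto (fun z : ℂ => (z - 1) * Complex.log (z - 1)) (nhdsWithin 1 Ssegᶜ) (𝓝 0) := by
  have h : Tendsto (fun z : ℂ => z - 1) (nhdsWithin 1 Ssegᶜ) (𝓝 0) := by
    have h2 := (continuous_id.sub (continuous_const (y := (1:ℂ)))).tendsto 1
    replace h2 : Tendsto (fun z : ℂ => z - 1) (𝓝 1) (𝓝 0) := by convert h2 using 2; rfl; exact (sub_self (1:ℂ)).symm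
    exact h2.mono_left nhdsWithin_le_nhds
  exact tendsto_self_mul_log.comp h

lemma T_eval_one (n : ℤ) : (T ℂ n).eval 1 = 1 := by
  induction n using Polynomial.Chebyshev.induct with
  | zero => simp
  | one => simp
  | add_two n h1 h2 =>
    rw [T_add_two]
    simp only [eval_sub, eval_mul, eval_ofNat, eval_X, h1, h2]
    ring
  | neg_add_one n h1 h2 =>
    rw [show (-(n:ℤ) - 1) = (-(n:ℤ)) - 1 from rfl, T_sub_one]
    simp only [eval_sub, eval_mul, eval_ofNat, eval_X, h1, h2]
    ring

lemma T_eval_neg_one (n : ℤ) : (T ℂ n).eval (-1) = if Even n then 1 else -1 := by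
  induction n using Polynomial.Chebyshev.induct with
  | zero => norm_num
  | one => norm_num [Int.even_iff]
  | add_two n h1 h2 =>
    rw [T_add_two]
    simp only [eval_sub, eval_mul, eval_ofNat, eval_X, h1, h2]
    by_cases h : Even (n:ℤ)
    · rw [if_pos h, if_neg (by simp only [Int.even_iff] at h ⊢; omega),
        if_pos (by simp only [Int.even_iff] at h ⊢; omega)]
      ring
    · rw [if_neg h, if_pos (by simp only [Int.even_iff] at h ⊢; omega),
        if_neg (by simp only [Int.even_iff] at h ⊢; omega)]
      ring
  | neg_add_one n h1 h2 =>
    rw [show (-(n:ℤ) - 1) = (-(n:ℤ)) - 1 from rfl, T_sub_one]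
    simp only [eval_sub, eval_mul, eval_ofNat, eval_X, h1, h2]
    by_cases h : Even (-(n:ℤ))
    · rw [if_pos h, if_neg (by simp only [Int.even_iff] at h ⊢; omega),
        if_neg (by simp only [Int.even_iff] at h ⊢; omega)]
      ring
    · rw [if_neg h, if_pos (by simp only [Int.even_iff] at h ⊢; omega),
        if_pos (by simp only [Int.even_iff] at h ⊢; omega)]
      ring

lemma integral_T_seg (m : ℕ) (hm : 1 ≤ m) :
    ∫ t in (-1:ℝ)..1, (T ℂ (m:ℤ)).eval (t:ℂ) =
      if Even m then 2/(1-(m:ℂ)^2) else 0 := by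
  rcases eq_or_lt_of_le hm with h1 | h2
  · rw [← h1]
    rw [if_neg (by decide)]
    have : ∀ t : ℝ, (T ℂ ((1:ℕ):ℤ)).eval (t:ℂ) = ((t:ℝ):ℂ) := by
      intro t; norm_num
    rw [intervalIntegral.integral_congr (fun t _ => this t),
      intervalIntegral.integral_ofReal]
    norm_num [integral_id]
  · have hm1 : ((m:ℂ)+1) ≠ 0 := by
      intro h
      have h2 : ((m+1:ℕ):ℂ) = 0 := by push_cast; linear_combination h
      have : (m+1 : ℕ) = 0 := by exact_mod_cast h2
      omega
    have hm2 : ((m:ℂ)-1) ≠ 0 := by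
      intro h
      have : ((m:ℕ):ℂ) = ((1:ℕ):ℂ) := by push_cast; linear_combination h
      have := Nat.cast_injective (R := ℂ) this
      omega
    set a : ℂ := (2*((m:ℂ)+1))⁻¹ with ha
    set b : ℂ := (2*((m:ℂ)-1))⁻¹ with hb
    have key : ∀ t ∈ Set.uIcc (-1:ℝ) 1,
        HasDerivAt (fun t : ℝ => a * (T ℂ ((m:ℤ)+1)).eval (t:ℂ)
          - b * (T ℂ ((m:ℤ)-1)).eval (t:ℂ)) ((T ℂ (m:ℤ)).eval (t:ℂ)) t := by
      intro t _
      have d1 := (((T ℂ ((m:ℤ)+1)).hasDerivAt ((t:ℝ):ℂ)).comp_ofReal).const_mul a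
      have d2 := (((T ℂ ((m:ℤ)-1)).hasDerivAt ((t:ℝ):ℂ)).comp_ofReal).const_mul b
      have hd := d1.sub d2
      convert hd using 1
      · rfl
      · rfl
      rw [T_derivative_eq_U, T_derivative_eq_U]
      rw [show (m:ℤ) + 1 - 1 = (m:ℤ) from by ring, show (m:ℤ) - 1 - 1 = (m:ℤ) - 2 from by ring]
      simp only [eval_mul, eval_intCast]
      have hTU : (2:ℂ[X]) * T ℂ (m:ℤ) = U ℂ (m:ℤ) - U ℂ ((m:ℤ)-2) := by
        have hx1 := T_eq_U_sub_X_mul_U ℂ (m:ℤ)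
        have hx2 := U_sub_two ℂ (m:ℤ)
        linear_combination 2*hx1 + hx2
      have hev := congrArg (Polynomial.eval ((t:ℝ):ℂ)) hTU
      simp only [eval_mul, eval_sub, eval_ofNat] at hev
      have hc1 : ((((m:ℤ)+1) : ℤ) : ℂ) = (m:ℂ)+1 := by push_cast; ring
      have hc2 : ((((m:ℤ)-1) : ℤ) : ℂ) = (m:ℂ)-1 := by push_cast; ring
      rw [hc1, hc2, ha, hb]
      field_simp
      linear_combination hev
    have hint : IntervalIntegrable (fun t:ℝ => (T ℂ (m:ℤ)).eval (t:ℂ)) volume (-1) 1 :=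
      (((T ℂ (m:ℤ)).continuous_aeval).comp Complex.continuous_ofReal).intervalIntegrable _ _
    rw [intervalIntegral.integral_eq_sub_of_hasDerivAt key hint]
    push_cast
    rw [_root_.T_eval_one, _root_.T_eval_one, _root_.T_eval_neg_one, _root_.T_eval_neg_one]
    by_cases h : Even m
    · rw [if_pos h, if_neg (by simpa [Int.even_add_one] using h),
        if_neg (by rw [Int.even_sub]; simpa [Int.even_coe_nat] using h)]
      have hms : (1:ℂ) - (m:ℂ)^2 ≠ 0 := by
        intro h
        exact (mul_ne_zero hm1 hm2) (by linear_combination -h)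
      rw [ha, hb]
      field_simp
      ring
    · rw [if_neg h, if_pos (by simpa [Int.even_add_one] using h),
        if_pos (by rw [Int.even_sub]; simpa [Int.even_coe_nat] using h)]
      ring

lemma muOne_zero : muOne 0 = 0 := by
  simp [muOne]

lemma muOne_succ (m : ℕ) :
    muOne (m+1) = muOne m + if Even m then 1/((m:ℂ)+1) else 0 := by
  unfold muOne
  by_cases h : Even m
  · obtain ⟨a, rfl⟩ := h
    rw [if_pos ⟨a, rfl⟩]
    rw [show (a + a + 1 + 1)/2 = (a + a + 1)/2 + 1 from by omega]
    rw [Finset.sum_Icc_succ_top (by omega)]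
    rw [show (a + a + 1)/2 = a from by omega]
    congr 1
    push_cast
    rw [show (2:ℂ) * ((a:ℂ)+1) - 1 = (a:ℂ) + (a:ℂ) + 1 from by ring]
  · rw [if_neg h]
    obtain ⟨a, rfl⟩ := Nat.not_even_iff_odd.mp h
    rw [show (2*a + 1 + 1 + 1)/2 = (2*a + 1 + 1)/2 from by omega]
    simp

noncomputable def VV (k : ℕ) : ℂ :=
  -(Complex.log 2)/(2*(Real.pi:ℂ)*Complex.I)
    + (1/(Complex.I*(Real.pi:ℂ))) * (muOne (k-1) + muOne k)

noncomputable def cc : ℂ := 1 / (2 * (Real.pi:ℂ) * Complex.I)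

lemma two_cc : 2 * cc = 1/(Complex.I*(Real.pi:ℂ)) := by
  unfold cc
  have h1 : (Real.pi:ℂ) ≠ 0 := by exact_mod_cast Real.pi_ne_zero
  field_simp

lemma VV_rec (k : ℕ) :
    VV (k+2) = 2*cc*(if Even (k+1) then 2/(1-((k+1:ℕ):ℂ)^2) else 0) + 2*VV (k+1) - VV k := by
  have hmu : muOne (k+2) - muOne (k+1) - muOne k + muOne (k-1)
      = if Even (k+1) then 2/(1-((k+1:ℕ):ℂ)^2) else 0 := by
    rcases Nat.even_or_odd k with h | h
    · rw [if_neg (by simpa [Nat.even_add_one] using h)]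
      rw [muOne_succ (k+1), if_neg (by simpa [Nat.even_add_one] using h)]
      rcases Nat.eq_zero_or_pos k with rfl | hk
      · simp
      · obtain ⟨j, rfl⟩ : ∃ j, k = j + 1 := ⟨k-1, by omega⟩
        rw [show j + 1 - 1 = j from rfl, muOne_succ j,
          if_neg (by simpa [Nat.even_add_one] using h)]
        ring
    · rw [if_pos (by obtain ⟨j, rfl⟩ := h; exact ⟨j+1, by ring⟩)]
      obtain ⟨j, rfl⟩ := h
      rw [muOne_succ (2*j+1+1), if_pos ⟨j+1, by ring⟩,
        show 2*j+1-1 = 2*j from rfl, muOne_succ (2*j), if_pos ⟨j, by ring⟩]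
      have h1 : 2*(j:ℂ)+1 ≠ 0 := by
        have := (Nat.cast_ne_zero (R := ℂ)).mpr (by omega : (2*j+1:ℕ) ≠ 0)
        push_cast at this; exact this
      have h2 : 2*(j:ℂ)+3 ≠ 0 := by
        have := (Nat.cast_ne_zero (R := ℂ)).mpr (by omega : (2*j+3:ℕ) ≠ 0)
        push_cast at this; exact this
      have h3 : 1 - (2*(j:ℂ)+2)^2 ≠ 0 := by
        intro h'
        exact (mul_ne_zero h1 h2) (by linear_combination -h')
      push_cast
      have key : (1:ℂ)/(2*(j:ℂ)+3) - 1/(2*(j:ℂ)+1) = 2/(1-(2*(j:ℂ)+2)^2) := by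
        rw [div_sub_div _ _ h2 h1, div_eq_div_iff (mul_ne_zero h2 h1) h3]
        ring
      linear_combination key
  unfold VV
  rw [show k + 2 - 1 = k + 1 from rfl, show k + 1 - 1 = k from rfl, two_cc]
  linear_combination (1/(Complex.I*(Real.pi:ℂ))) * hmu

lemma F_rec (k : ℕ) {z : ℂ} (hz : z ∉ Sseg) :
    (∫ t in (-1:ℝ)..1, (T ℂ ((k:ℤ)+2)).eval (t:ℂ) / ((t:ℂ) - z)) =
      2 * (∫ t in (-1:ℝ)..1, (T ℂ ((k:ℤ)+1)).eval (t:ℂ))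
      + 2*z*(∫ t in (-1:ℝ)..1, (T ℂ ((k:ℤ)+1)).eval (t:ℂ) / ((t:ℂ) - z))
      - (∫ t in (-1:ℝ)..1, (T ℂ (k:ℤ)).eval (t:ℂ) / ((t:ℂ) - z)) := by
  have heq : Set.EqOn (fun t:ℝ => (T ℂ ((k:ℤ)+2)).eval (t:ℂ) / ((t:ℂ) - z))
      (fun t:ℝ => (2 * (T ℂ ((k:ℤ)+1)).eval (t:ℂ)
        + (2*z) * ((T ℂ ((k:ℤ)+1)).eval (t:ℂ) / ((t:ℂ) - z)))
        - (T ℂ (k:ℤ)).eval (t:ℂ) / ((t:ℂ) - z)) (Set.uIcc (-1) 1) := by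
    intro t ht
    rw [Set.uIcc_of_le (by norm_num)] at ht
    have hne := sub_ne_zero_of_notmem hz ht
    have hT := congrArg (Polynomial.eval ((t:ℝ):ℂ)) (T_add_two ℂ (k:ℤ))
    simp only [eval_sub, eval_mul, eval_ofNat, eval_X] at hT
    beta_reduce
    rw [hT]
    field_simp
    ring
  rw [intervalIntegral.integral_congr heq]
  have hi1 : IntervalIntegrable (fun t:ℝ => 2 * (T ℂ ((k:ℤ)+1)).eval (t:ℂ)) volume (-1) 1 :=
    (continuous_const.mul (((T ℂ ((k:ℤ)+1)).continuous_aeval).comp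
      Complex.continuous_ofReal)).intervalIntegrable _ _
  have hi2 : IntervalIntegrable
      (fun t:ℝ => (2*z) * ((T ℂ ((k:ℤ)+1)).eval (t:ℂ) / ((t:ℂ) - z))) volume (-1) 1 :=
    (intInt _ hz).const_mul _
  have hi3 := intInt (T ℂ (k:ℤ)) hz
  rw [intervalIntegral.integral_sub (hi1.add hi2) hi3,
    intervalIntegral.integral_add hi1 hi2,
    intervalIntegral.integral_const_mul, intervalIntegral.integral_const_mul]

lemma tendsto_log_add_one :
    Tendsto (fun z : ℂ => Complex.log (z+1)) (nhdsWithin 1 Ssegᶜ) (𝓝 (Complex.log 2)) := by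
  have h : Tendsto (fun z : ℂ => z+1) (nhdsWithin 1 Ssegᶜ) (𝓝 2) := by
    have hco : Continuous (fun z : ℂ => z + 1) := continuous_id.add continuous_const
    have := (hco.tendsto (1:ℂ)).mono_left (nhdsWithin_le_nhds (s := Ssegᶜ))
    norm_num at this
    exact this
  exact h.clog (by norm_num [Complex.mem_slitPlane_iff])

lemma main_tendsto (k : ℕ) :
    Tendsto (fun z : ℂ => cc * FF k z - cc * Complex.log (z-1))
      (nhdsWithin 1 Ssegᶜ) (𝓝 (VV k)) := by
  induction k using Nat.twoStepInduction with
  | zero =>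
    have heq : (fun z : ℂ => cc * FF 0 z - cc * Complex.log (z-1))
        =ᶠ[nhdsWithin 1 Ssegᶜ] (fun z => -(cc * Complex.log (z+1))) := by
      filter_upwards [self_mem_nhdsWithin, eventually_log_split] with z hz hsplit
      have h0 : FF 0 z = Complex.log ((z-1)/(z+1)) := by
        rw [FF, ← integral_one_div_seg hz]
        apply intervalIntegral.integral_congr
        intro t _
        norm_num
      rw [h0, hsplit]
      ring
    rw [show VV 0 = -(cc * Complex.log 2) from by
      rw [VV, muOne_zero]; unfold cc; ring]
    apply Tendsto.congr' heq.symm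
    exact (tendsto_log_add_one.const_mul cc).neg
  | one =>
    have heq : (fun z : ℂ => cc * FF 1 z - cc * Complex.log (z-1))
        =ᶠ[nhdsWithin 1 Ssegᶜ]
        (fun z => 2*cc + cc * ((z-1) * Complex.log (z-1)) - (cc * z) * Complex.log (z+1)) := by
      filter_upwards [self_mem_nhdsWithin, eventually_log_split] with z hz hsplit
      have h1 : FF 1 z = 2 + z * Complex.log ((z-1)/(z+1)) := by
        rw [FF, ← integral_one_div_seg hz]
        have heq2 : Set.EqOn (fun t:ℝ => (T ℂ ((1:ℕ):ℤ)).eval (t:ℂ) / ((t:ℂ) - z))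
            (fun t:ℝ => 1 + z * (1 / ((t:ℂ) - z))) (Set.uIcc (-1) 1) := by
          intro t ht
          rw [Set.uIcc_of_le (by norm_num)] at ht
          have hne := sub_ne_zero_of_notmem hz ht
          beta_reduce
          norm_num
          field_simp
          ring
        rw [intervalIntegral.integral_congr heq2,
          intervalIntegral.integral_add (intervalIntegrable_const)
            ((by simpa using intInt 1 hz : IntervalIntegrable
              (fun t : ℝ => 1 / ((t:ℂ) - z)) volume (-1) 1).const_mul z),
          intervalIntegral.integral_const_mul, intervalIntegral.integral_const]
        norm_num
      rw [h1, hsplit]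
      ring
    apply Tendsto.congr' heq.symm
    have hlim : Tendsto (fun z : ℂ =>
        2*cc + cc * ((z-1) * Complex.log (z-1)) - (cc * z) * Complex.log (z+1))
        (nhdsWithin 1 Ssegᶜ) (𝓝 (2*cc + cc * 0 - (cc * 1) * Complex.log 2)) := by
      apply Tendsto.sub
      · exact (tendsto_const_nhds.add (tendsto_sub_one_mul_log.const_mul cc))
      · apply Tendsto.mul _ tendsto_log_add_one
        exact (tendsto_const_nhds.mul
          (continuous_id.continuousAt.tendsto.mono_left nhdsWithin_le_nhds))
    convert hlim using 2
    rw [VV, muOne_zero, show muOne 1 = 1 from by norm_num [muOne], ← two_cc]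
    unfold cc
    ring
  | more k ih ih1 =>
    set cI : ℂ := ∫ t in (-1:ℝ)..1, (T ℂ (((k+1:ℕ)):ℤ)).eval (t:ℂ) with hcI
    have heq : (fun z : ℂ => cc * FF (k+2) z - cc * Complex.log (z-1))
        =ᶠ[nhdsWithin 1 Ssegᶜ]
        (fun z => 2*cc*cI + 2*z*(cc * FF (k+1) z - cc * Complex.log (z-1))
          - (cc * FF k z - cc * Complex.log (z-1))
          + (2*cc)*((z-1) * Complex.log (z-1))) := by
      filter_upwards [self_mem_nhdsWithin] with z hz
      have hrec := F_rec k hz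
      have hFF : FF (k+2) z = 2 * cI + 2*z*FF (k+1) z - FF k z := by
        rw [FF, FF, FF, hcI]
        rw [show (((k+2:ℕ)):ℤ) = (k:ℤ)+2 from by push_cast; ring,
          show (((k+1:ℕ)):ℤ) = (k:ℤ)+1 from by push_cast; ring]
        exact hrec
      rw [hFF]
      ring
    apply Tendsto.congr' heq.symm
    have hlim : Tendsto (fun z : ℂ =>
        2*cc*cI + 2*z*(cc * FF (k+1) z - cc * Complex.log (z-1))
          - (cc * FF k z - cc * Complex.log (z-1))
          + (2*cc)*((z-1) * Complex.log (z-1)))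
        (nhdsWithin 1 Ssegᶜ)
        (𝓝 (2*cc*cI + 2*1*VV (k+1) - VV k + (2*cc)*0)) := by
      apply Tendsto.add
      apply Tendsto.sub
      · apply Tendsto.add tendsto_const_nhds
        apply Tendsto.mul _ ih1
        exact (tendsto_const_nhds.mul
          (continuous_id.continuousAt.tendsto.mono_left nhdsWithin_le_nhds))
      · exact ih
      · exact tendsto_sub_one_mul_log.const_mul (2*cc)
    convert hlim using 2
    rw [VV_rec k, hcI, integral_T_seg (k+1) (by omega)]
    push_cast
    ring

end CauchyChebyshevAux

/-- **Finite part of the Cauchy transform of a Chebyshev polynomial at the right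
endpoint.**  For every `k ≥ 0`, the function `z ↦ C T_k(z) − (1/(2πi))·Log(z−1)` on
`ℂ∖[−1,1]`, where `C T_k(z) = (1/(2πi)) ∫_{−1}^1 T_k(t)/(t−z) dt`, has a limit as
`z → 1` with `z ∉ [−1,1]`, equal to
`−Log 2/(2πi) + (1/(iπ))·(μ_{k−1}(1) + μ_k(1))` (with `μ_{−1}(1) = 0`). -/
theorem cauchyTransform_chebyshevT_finite_part (k : ℕ) :
    Tendsto
      (fun z : ℂ =>
        (1 / (2 * (Real.pi : ℂ) * Complex.I)) *
            (∫ t in (-1 : ℝ)..1,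
              (Polynomial.Chebyshev.T ℂ (k : ℤ)).eval (t : ℂ) / ((t : ℂ) - z)) -
          (1 / (2 * (Real.pi : ℂ) * Complex.I)) * Complex.log (z - 1))
      (nhdsWithin 1 ((fun t : ℝ => (t : ℂ)) '' Set.Icc (-1) 1)ᶜ)
      (nhds (-(Complex.log 2) / (2 * (Real.pi : ℂ) * Complex.I) +
        (1 / (Complex.I * (Real.pi : ℂ))) *
          ((if k = 0 then 0 else muOne (k - 1)) + muOne k))) := by
  have hif : (if k = 0 then (0:ℂ) else muOne (k - 1)) = muOne (k - 1) := by
    rcases k with _ | k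
    · simp [muOne_zero]
    · simp
  rw [hif]
  exact main_tendsto k
end
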